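/- Let p ≥ r and let Λ₁₁, Λ₁₂, Λ₂₁, Λ₂₂ be real p×r matrices of full column rank r. Let η₁, η₂ : [0,1] → ℝʳ be continuous functions such that η₂ is not constant on any nonempty open subinterval of [0,1] and the set {η₂(t) : t ∈ [0,1]} spans ℝʳ. Let M₁, M₂ : [0,1] → [0,1] be continuous, strictly increasing functions with M₁(0) = M₂(0) = 0 and M₁(1) = M₂(1) = 1. If Λ₁₁ η₁(t) = Λ₁₂ η₂(t) for all t ∈ [0,1] and Λ₂₁ η₁(M₁(t)) = Λ₂₂ η₂(M₂(t)) for all t ∈ [0,1], then M₁(t) = M₂(t) for all t ∈ [0,1]. (That is, the warping function in the time-aligned factor model is identifiable when the shared latent factor curve is continuous and not constant on any interval of time.) -/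

import Mathlib

open Matrix

open Set Filter Topology


open Set Filter Topology

/-- A strictly monotone surjection of `[0,1]` onto itself is continuous on `[0,1]`. -/
lemma contOn_of_strictMonoOn_surjOn (f : ℝ → ℝ)
    (hm : StrictMonoOn f (Set.Icc 0 1))
    (hmaps : Set.MapsTo f (Set.Icc 0 1) (Set.Icc 0 1))
    (hs : Set.SurjOn f (Set.Icc 0 1) (Set.Icc 0 1))
    (h0 : f 0 = 0) (h1 : f 1 = 1) :
    ContinuousOn f (Set.Icc 0 1) := by
  intro a ha
  have hfa : f a ∈ Set.Icc (0:ℝ) 1 := hmaps ha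
  have hright : ContinuousWithinAt f (Set.Icc 0 1 ∩ Set.Ici a) a := by
    rcases eq_or_lt_of_le ha.2 with h | h
    · -- a = 1
      have hsub : Set.Icc (0:ℝ) 1 ∩ Set.Ici a ⊆ {a} := by
        intro x hx
        exact Set.mem_singleton_iff.2 (le_antisymm (h ▸ hx.1.2) hx.2)
      exact (continuousWithinAt_singleton (f := f) (x := a)).mono hsub
    · -- a < 1
      have hmem : Set.Icc (0:ℝ) 1 ∈ 𝓝[≥] a := Icc_mem_nhdsGE_of_mem ⟨ha.1, h⟩
      have hfa1 : f a < 1 := by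
        have := hm ha (Set.mem_Icc.2 ⟨zero_le_one, le_refl 1⟩) h
        rwa [h1] at this
      have : ContinuousWithinAt f (Set.Ici a) a := by
        apply hm.continuousWithinAt_right_of_exists_between hmem
        intro b hb
        have hy : min b 1 ∈ Set.Icc (0:ℝ) 1 :=
          ⟨le_min (hfa.1.trans hb.le) zero_le_one, min_le_right _ _⟩
        obtain ⟨c, hc, hfc⟩ := hs hy
        exact ⟨c, hc, by rw [hfc]; exact lt_min hb hfa1, by rw [hfc]; exact min_le_left _ _⟩
      exact this.mono Set.inter_subset_right
  have hleft : ContinuousWithinAt f (Set.Icc 0 1 ∩ Set.Iic a) a := by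
    rcases eq_or_lt_of_le ha.1 with h | h
    · have hsub : Set.Icc (0:ℝ) 1 ∩ Set.Iic a ⊆ {a} := by
        intro x hx
        exact Set.mem_singleton_iff.2 (le_antisymm hx.2 (h ▸ hx.1.1))
      exact (continuousWithinAt_singleton (f := f) (x := a)).mono hsub
    · have hmem : Set.Icc (0:ℝ) 1 ∈ 𝓝[≤] a := Icc_mem_nhdsLE_of_mem ⟨h, ha.2⟩
      have hfa0 : 0 < f a := by
        have := hm (Set.mem_Icc.2 ⟨le_refl 0, zero_le_one⟩) ha h
        rwa [h0] at this
      have : ContinuousWithinAt f (Set.Iic a) a := by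
        apply hm.continuousWithinAt_left_of_exists_between hmem
        intro b hb
        have hy : max b 0 ∈ Set.Icc (0:ℝ) 1 :=
          ⟨le_max_right _ _, max_le (hb.le.trans hfa.2) zero_le_one⟩
        obtain ⟨c, hc, hfc⟩ := hs hy
        exact ⟨c, hc, by rw [hfc]; exact le_max_left _ _, by rw [hfc]; exact max_lt hb hfa0⟩
      exact this.mono Set.inter_subset_right
  have := hleft.union hright
  apply this.mono
  intro x hx
  rcases le_total x a with h | h
  · exact Or.inl ⟨hx, h⟩
  · exact Or.inr ⟨hx, h⟩

lemma iter_apply' {r : ℕ} (η : ℝ → Fin r → ℝ) (W : ℝ → ℝ)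
    (hWmaps : Set.MapsTo W (Set.Icc 0 1) (Set.Icc 0 1))
    (A : (Fin r → ℝ) →L[ℝ] (Fin r → ℝ))
    (hA : ∀ u ∈ Set.Icc (0:ℝ) 1, A (η u) = η (W u)) :
    ∀ n : ℕ, ∀ u ∈ Set.Icc (0:ℝ) 1, (A ^ n) (η u) = η (W^[n] u) := by
  intro n
  induction n with
  | zero => intro u _; simp
  | succ n ih =>
    intro u hu
    rw [pow_succ, Function.iterate_succ_apply, ContinuousLinearMap.mul_apply, hA u hu]
    exact ih (W u) (hWmaps hu)

lemma pow_norm_bound {r : ℕ} (η : ℝ → Fin r → ℝ)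
    (hηc : ContinuousOn η (Set.Icc 0 1))
    (hspan : Submodule.span ℝ (η '' Set.Icc 0 1) = ⊤)
    (W : ℝ → ℝ) (hWmaps : Set.MapsTo W (Set.Icc 0 1) (Set.Icc 0 1))
    (A : (Fin r → ℝ) →L[ℝ] (Fin r → ℝ))
    (hA : ∀ u ∈ Set.Icc (0:ℝ) 1, A (η u) = η (W u)) :
    ∃ C, ∀ n : ℕ, ‖A ^ n‖ ≤ C := by
  obtain ⟨R, hR⟩ := IsCompact.exists_bound_of_continuousOn isCompact_Icc hηc
  have hiter := iter_apply' η W hWmaps A hA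
  have hpt : ∀ v : Fin r → ℝ, ∃ C, ∀ n : ℕ, ‖(A ^ n) v‖ ≤ C := by
    intro v
    have hv : v ∈ Submodule.span ℝ (η '' Set.Icc 0 1) := by rw [hspan]; trivial
    induction hv using Submodule.span_induction with
    | mem x hx =>
      obtain ⟨s, hsm, rfl⟩ := hx
      exact ⟨R, fun n => by
        rw [hiter n s hsm]; exact hR _ (hWmaps.iterate n hsm)⟩
    | zero => exact ⟨0, fun n => by simp⟩
    | add x y hx hy hCx hCy =>
      obtain ⟨Cx, hCx⟩ := hCx
      obtain ⟨Cy, hCy⟩ := hCy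
      exact ⟨Cx + Cy, fun n => by
        rw [map_add]
        exact (norm_add_le _ _).trans (add_le_add (hCx n) (hCy n))⟩
    | smul c x hx hCx =>
      obtain ⟨Cx, hCx⟩ := hCx
      refine ⟨|c| * Cx, fun n => ?_⟩
      rw [_root_.map_smul, norm_smul, Real.norm_eq_abs]
      exact mul_le_mul_of_nonneg_left (hCx n) (abs_nonneg c)
  exact banach_steinhaus hpt

lemma no_up {r : ℕ} (η : ℝ → Fin r → ℝ)
    (hηc : ContinuousOn η (Set.Icc 0 1))
    (hηnc : ∀ a b : ℝ, 0 ≤ a → a < b → b ≤ 1 →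
      ∃ s ∈ Set.Ioo a b, ∃ t ∈ Set.Ioo a b, η s ≠ η t)
    (hspan : Submodule.span ℝ (η '' Set.Icc 0 1) = ⊤)
    (W V : ℝ → ℝ)
    (hWc : ContinuousOn W (Set.Icc 0 1)) (hVc : ContinuousOn V (Set.Icc 0 1))
    (hWm : StrictMonoOn W (Set.Icc 0 1)) (hVm : StrictMonoOn V (Set.Icc 0 1))
    (hWmaps : Set.MapsTo W (Set.Icc 0 1) (Set.Icc 0 1))
    (hVmaps : Set.MapsTo V (Set.Icc 0 1) (Set.Icc 0 1))
    (hVW : ∀ u ∈ Set.Icc (0:ℝ) 1, V (W u) = u)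
    (hWV : ∀ u ∈ Set.Icc (0:ℝ) 1, W (V u) = u)
    (A B : (Fin r → ℝ) →L[ℝ] (Fin r → ℝ)) (hBA : B * A = 1)
    (hA : ∀ u ∈ Set.Icc (0:ℝ) 1, A (η u) = η (W u))
    (hB : ∀ u ∈ Set.Icc (0:ℝ) 1, B (η u) = η (V u)) :
    ∀ u ∈ Set.Icc (0:ℝ) 1, ¬ u < W u := by
  intro u₀ hu₀ hlt
  have orbW_mem : ∀ x ∈ Set.Icc (0:ℝ) 1, ∀ n : ℕ, W^[n] x ∈ Set.Icc (0:ℝ) 1 :=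
    fun x hx n => hWmaps.iterate n hx
  have orbV_mem : ∀ x ∈ Set.Icc (0:ℝ) 1, ∀ n : ℕ, V^[n] x ∈ Set.Icc (0:ℝ) 1 :=
    fun x hx n => hVmaps.iterate n hx
  have hWiter_mono : ∀ n : ℕ, ∀ x ∈ Set.Icc (0:ℝ) 1, ∀ y ∈ Set.Icc (0:ℝ) 1,
      x ≤ y → W^[n] x ≤ W^[n] y := by
    intro n
    induction n with
    | zero => intro x _ y _ h; simpa using h
    | succ n ih =>
      intro x hx y hy hxy
      rw [Function.iterate_succ_apply, Function.iterate_succ_apply]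
      exact ih (W x) (hWmaps hx) (W y) (hWmaps hy) (hWm.monotoneOn hx hy hxy)
  have hViter_mono : ∀ n : ℕ, ∀ x ∈ Set.Icc (0:ℝ) 1, ∀ y ∈ Set.Icc (0:ℝ) 1,
      x ≤ y → V^[n] x ≤ V^[n] y := by
    intro n
    induction n with
    | zero => intro x _ y _ h; simpa using h
    | succ n ih =>
      intro x hx y hy hxy
      rw [Function.iterate_succ_apply, Function.iterate_succ_apply]
      exact ih (V x) (hVmaps hx) (V y) (hVmaps hy) (hVm.monotoneOn hx hy hxy)
  -- limit of an increasing W-orbit is a fixed point of W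
  have fixW : ∀ x ∈ Set.Icc (0:ℝ) 1, x ≤ W x →
      ∃ ℓ ∈ Set.Icc (0:ℝ) 1, (∀ n : ℕ, W^[n] x ≤ ℓ) ∧ W ℓ = ℓ ∧
        Tendsto (fun n => W^[n] x) atTop (𝓝 ℓ) := by
    intro x hx hxW
    have hmono : Monotone fun n => W^[n] x := by
      apply monotone_nat_of_le_succ
      intro n
      rw [Function.iterate_succ_apply]
      exact hWiter_mono n x hx (W x) (hWmaps hx) hxW
    have hbdd : BddAbove (Set.range fun n => W^[n] x) := by
      refine ⟨1, ?_⟩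
      rintro _ ⟨n, rfl⟩
      exact (orbW_mem x hx n).2
    set ℓ := ⨆ n, W^[n] x with hℓdef
    have htend : Tendsto (fun n => W^[n] x) atTop (𝓝 ℓ) := tendsto_atTop_ciSup hmono hbdd
    have hle : ∀ n : ℕ, W^[n] x ≤ ℓ := fun n => le_ciSup hbdd n
    have hℓIcc : ℓ ∈ Set.Icc (0:ℝ) 1 :=
      ⟨ge_of_tendsto' htend fun n => (orbW_mem x hx n).1,
       le_of_tendsto' htend fun n => (orbW_mem x hx n).2⟩
    refine ⟨ℓ, hℓIcc, hle, ?_, htend⟩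
    have htend' : Tendsto (fun n => W^[n] x) atTop (𝓝[Set.Icc (0:ℝ) 1] ℓ) :=
      tendsto_nhdsWithin_of_tendsto_nhds_of_eventually_within _ htend
        (Eventually.of_forall (orbW_mem x hx))
    have h1 : Tendsto (fun n => W (W^[n] x)) atTop (𝓝 (W ℓ)) :=
      ((hWc ℓ hℓIcc).tendsto).comp htend'
    have h2 : Tendsto (fun n => W (W^[n] x)) atTop (𝓝 ℓ) := by
      have := htend.comp (tendsto_add_atTop_nat 1)
      simpa [Function.comp_def, Function.iterate_succ_apply'] using this
    exact tendsto_nhds_unique h1 h2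
  have fixV : ∀ x ∈ Set.Icc (0:ℝ) 1, V x ≤ x →
      ∃ ℓ ∈ Set.Icc (0:ℝ) 1, (∀ n : ℕ, ℓ ≤ V^[n] x) ∧ V ℓ = ℓ ∧
        Tendsto (fun n => V^[n] x) atTop (𝓝 ℓ) := by
    intro x hx hxV
    have hanti : Antitone fun n => V^[n] x := by
      apply antitone_nat_of_succ_le
      intro n
      rw [Function.iterate_succ_apply]
      exact hViter_mono n (V x) (hVmaps hx) x hx hxV
    have hbdd : BddBelow (Set.range fun n => V^[n] x) := by
      refine ⟨0, ?_⟩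
      rintro _ ⟨n, rfl⟩
      exact (orbV_mem x hx n).1
    set ℓ := ⨅ n, V^[n] x with hℓdef
    have htend : Tendsto (fun n => V^[n] x) atTop (𝓝 ℓ) := tendsto_atTop_ciInf hanti hbdd
    have hle : ∀ n : ℕ, ℓ ≤ V^[n] x := fun n => ciInf_le hbdd n
    have hℓIcc : ℓ ∈ Set.Icc (0:ℝ) 1 :=
      ⟨ge_of_tendsto' htend fun n => (orbV_mem x hx n).1,
       le_of_tendsto' htend fun n => (orbV_mem x hx n).2⟩
    refine ⟨ℓ, hℓIcc, hle, ?_, htend⟩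
    have htend' : Tendsto (fun n => V^[n] x) atTop (𝓝[Set.Icc (0:ℝ) 1] ℓ) :=
      tendsto_nhdsWithin_of_tendsto_nhds_of_eventually_within _ htend
        (Eventually.of_forall (orbV_mem x hx))
    have h1 : Tendsto (fun n => V (V^[n] x)) atTop (𝓝 (V ℓ)) :=
      ((hVc ℓ hℓIcc).tendsto).comp htend'
    have h2 : Tendsto (fun n => V (V^[n] x)) atTop (𝓝 ℓ) := by
      have := htend.comp (tendsto_add_atTop_nat 1)
      simpa [Function.comp_def, Function.iterate_succ_apply'] using this
    exact tendsto_nhds_unique h1 h2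
  obtain ⟨b, hbIcc, hble, hWb, hbtend⟩ := fixW u₀ hu₀ hlt.le
  have hVu₀ : V u₀ < u₀ := by
    have := hVm hu₀ (hWmaps hu₀) hlt
    rwa [hVW u₀ hu₀] at this
  obtain ⟨a, haIcc, hale, hVa, hatend⟩ := fixV u₀ hu₀ hVu₀.le
  have hWa : W a = a := by
    conv_lhs => rw [← hVa]
    exact hWV a haIcc
  have hub' : W u₀ ≤ b := by simpa using hble 1
  have hau : a ≤ V u₀ := by simpa using hale 1
  have hau₀ : a < u₀ := lt_of_le_of_lt hau hVu₀
  have hu₀b : u₀ < b := lt_of_lt_of_le hlt hub'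
  have hab : a < b := hau₀.trans hu₀b
  have hu₀Ioo : u₀ ∈ Set.Ioo a b := ⟨hau₀, hu₀b⟩
  -- no fixed point inside (a,b)
  have hnofix : ∀ c ∈ Set.Ioo a b, W c ≠ c := by
    intro c hc hWceq
    have hcIcc : c ∈ Set.Icc (0:ℝ) 1 := ⟨haIcc.1.trans hc.1.le, hc.2.le.trans hbIcc.2⟩
    have hVceq : V c = c := by
      have := hVW c hcIcc
      rwa [hWceq] at this
    rcases le_or_gt c u₀ with h | h
    · have hcle : ∀ n : ℕ, c ≤ V^[n] u₀ := by
        intro n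
        induction n with
        | zero => simpa using h
        | succ n ih =>
          rw [Function.iterate_succ_apply']
          calc c = V c := hVceq.symm
          _ ≤ V (V^[n] u₀) := hVm.monotoneOn hcIcc (orbV_mem u₀ hu₀ n) ih
      have : c ≤ a := ge_of_tendsto' hatend hcle
      exact absurd hc.1 (not_lt.2 this)
    · have hcge : ∀ n : ℕ, W^[n] u₀ ≤ c := by
        intro n
        induction n with
        | zero => simpa using h.le
        | succ n ih =>
          rw [Function.iterate_succ_apply']
          calc W (W^[n] u₀) ≤ W c := hWm.monotoneOn (orbW_mem u₀ hu₀ n) hcIcc ih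
          _ = c := hWceq
      have : b ≤ c := le_of_tendsto' hbtend hcge
      exact absurd hc.2 (not_lt.2 this)
  -- W > id on (a,b)
  have hsign : ∀ s ∈ Set.Ioo a b, s < W s := by
    intro s hs
    have hsIcc : s ∈ Set.Icc (0:ℝ) 1 := ⟨haIcc.1.trans hs.1.le, hs.2.le.trans hbIcc.2⟩
    rcases lt_trichotomy s (W s) with h | h | h
    · exact h
    · exact absurd h.symm (hnofix s hs)
    · exfalso
      set f : ℝ → ℝ := fun x => W x - x with hfdef
      have hfc : ContinuousOn f (Set.Icc 0 1) := hWc.sub continuousOn_id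
      rcases lt_trichotomy s u₀ with hsu | hsu | hsu
      · have hsub : Set.Icc s u₀ ⊆ Set.Icc (0:ℝ) 1 :=
          Set.Icc_subset_Icc hsIcc.1 hu₀.2
        have h0mem : (0:ℝ) ∈ Set.Ioo (f s) (f u₀) :=
          ⟨sub_neg.2 h, sub_pos.2 hlt⟩
        obtain ⟨c, hc, hfc0⟩ := intermediate_value_Ioo hsu.le (hfc.mono hsub) h0mem
        have hWceq : W c = c := by
          have : W c - c = 0 := hfc0
          linarith
        exact hnofix c ⟨hs.1.trans hc.1, hc.2.trans hu₀Ioo.2⟩ hWceq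
      · rw [hsu] at h; exact absurd hlt (not_lt.2 h.le)
      · have hsub : Set.Icc u₀ s ⊆ Set.Icc (0:ℝ) 1 :=
          Set.Icc_subset_Icc hu₀.1 hsIcc.2
        have h0mem : (0:ℝ) ∈ Set.Ioo (f s) (f u₀) :=
          ⟨sub_neg.2 h, sub_pos.2 hlt⟩
        obtain ⟨c, hc, hfc0⟩ := intermediate_value_Ioo' hsu.le (hfc.mono hsub) h0mem
        have hWceq : W c = c := by
          have : W c - c = 0 := hfc0
          linarith
        exact hnofix c ⟨hu₀Ioo.1.trans hc.1, hc.2.trans hs.2⟩ hWceq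
  -- all orbits in (a,b) converge to b
  have horb : ∀ s ∈ Set.Ioo a b, Tendsto (fun n => W^[n] s) atTop (𝓝 b) := by
    intro s hs
    have hsIcc : s ∈ Set.Icc (0:ℝ) 1 := ⟨haIcc.1.trans hs.1.le, hs.2.le.trans hbIcc.2⟩
    obtain ⟨ℓ, hℓIcc, hℓle, hWℓ, hℓtend⟩ := fixW s hsIcc (hsign s hs).le
    have hsℓ : s ≤ ℓ := by simpa using hℓle 0
    have hℓb : ℓ ≤ b := by
      have hbound : ∀ n : ℕ, W^[n] s ≤ b := by
        intro n
        induction n with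
        | zero => simpa using hs.2.le
        | succ n ih =>
          rw [Function.iterate_succ_apply']
          calc W (W^[n] s) ≤ W b := hWm.monotoneOn (orbW_mem s hsIcc n) hbIcc ih
          _ = b := hWb
      exact le_of_tendsto' hℓtend hbound
    have hℓeq : ℓ = b := by
      rcases eq_or_lt_of_le hℓb with h | h
      · exact h
      · exact absurd hWℓ (hnofix ℓ ⟨lt_of_lt_of_le hs.1 hsℓ, h⟩)
    rwa [hℓeq] at hℓtend
  -- Banach–Steinhaus bound for powers of B
  obtain ⟨C, hC⟩ := pow_norm_bound η hηc hspan V hVmaps B hB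
  obtain ⟨s, hs, t, ht, hne⟩ := hηnc a b haIcc.1 hab hbIcc.2
  apply hne
  have hsIcc : s ∈ Set.Icc (0:ℝ) 1 := ⟨haIcc.1.trans hs.1.le, hs.2.le.trans hbIcc.2⟩
  have htIcc : t ∈ Set.Icc (0:ℝ) 1 := ⟨haIcc.1.trans ht.1.le, ht.2.le.trans hbIcc.2⟩
  have hBA_pow : ∀ n : ℕ, (B ^ n) * (A ^ n) = 1 := by
    intro n
    induction n with
    | zero => simp
    | succ n ih =>
      rw [pow_succ B, pow_succ' A, mul_assoc, ← mul_assoc B A, hBA, one_mul, ih]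
  have hiterW := iter_apply' η W hWmaps A hA
  have hkey : ∀ n : ℕ, ‖η s - η t‖ ≤ C * ‖η (W^[n] s) - η (W^[n] t)‖ := by
    intro n
    have h2 : (A ^ n) (η s - η t) = η (W^[n] s) - η (W^[n] t) := by
      rw [map_sub, hiterW n s hsIcc, hiterW n t htIcc]
    have h1 : (B ^ n) ((A ^ n) (η s - η t)) = η s - η t := by
      have := congrArg
        (fun f : (Fin r → ℝ) →L[ℝ] (Fin r → ℝ) => f (η s - η t)) (hBA_pow n)
      simpa [ContinuousLinearMap.mul_apply] using this
    calc ‖η s - η t‖ = ‖(B ^ n) ((A ^ n) (η s - η t))‖ := by rw [h1]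
    _ ≤ ‖B ^ n‖ * ‖(A ^ n) (η s - η t)‖ := (B ^ n).le_opNorm _
    _ = ‖B ^ n‖ * ‖η (W^[n] s) - η (W^[n] t)‖ := by rw [h2]
    _ ≤ C * ‖η (W^[n] s) - η (W^[n] t)‖ :=
      mul_le_mul_of_nonneg_right (hC n) (norm_nonneg _)
  have hbIcc' := hbIcc
  have hηb : Tendsto η (𝓝[Set.Icc (0:ℝ) 1] b) (𝓝 (η b)) := (hηc b hbIcc).tendsto
  have hT1 : Tendsto (fun n => η (W^[n] s)) atTop (𝓝 (η b)) := by
    refine hηb.comp ?_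
    exact tendsto_nhdsWithin_of_tendsto_nhds_of_eventually_within _ (horb s hs)
      (Eventually.of_forall (orbW_mem s hsIcc))
  have hT2 : Tendsto (fun n => η (W^[n] t)) atTop (𝓝 (η b)) := by
    refine hηb.comp ?_
    exact tendsto_nhdsWithin_of_tendsto_nhds_of_eventually_within _ (horb t ht)
      (Eventually.of_forall (orbW_mem t htIcc))
  have hlim : Tendsto (fun n => C * ‖η (W^[n] s) - η (W^[n] t)‖) atTop (𝓝 0) := by
    have : Tendsto (fun n => ‖η (W^[n] s) - η (W^[n] t)‖) atTop (𝓝 ‖η b - η b‖) :=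
      (hT1.sub hT2).norm
    have h0 : Tendsto (fun n => ‖η (W^[n] s) - η (W^[n] t)‖) atTop (𝓝 0) := by
      simpa using this
    simpa using h0.const_mul C
  have hfin : ‖η s - η t‖ ≤ 0 := ge_of_tendsto' hlim hkey
  have : η s - η t = 0 := norm_le_zero_iff.1 hfin
  exact sub_eq_zero.1 this

/-- Identifiability of the warping function in the time-aligned factor model:
if two factorizations with full-column-rank loading matrices, continuous shared
factor curves (with `η₂` nowhere locally constant and spanning `ℝʳ`), and warping
functions `M₁`, `M₂` induce the same means, then `M₁ = M₂` on `[0,1]`. -/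
theorem warping_identifiable {p r : ℕ} (hpr : r ≤ p)
    (Λ₁₁ Λ₁₂ Λ₂₁ Λ₂₂ : Matrix (Fin p) (Fin r) ℝ)
    (hΛ₁₁ : LinearIndependent ℝ Λ₁₁ᵀ) (hΛ₁₂ : LinearIndependent ℝ Λ₁₂ᵀ)
    (hΛ₂₁ : LinearIndependent ℝ Λ₂₁ᵀ) (hΛ₂₂ : LinearIndependent ℝ Λ₂₂ᵀ)
    (η₁ η₂ : ℝ → Fin r → ℝ)
    (hη₁c : ContinuousOn η₁ (Set.Icc 0 1)) (hη₂c : ContinuousOn η₂ (Set.Icc 0 1))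
    (hη₂nc : ∀ a b : ℝ, 0 ≤ a → a < b → b ≤ 1 →
      ∃ s ∈ Set.Ioo a b, ∃ t ∈ Set.Ioo a b, η₂ s ≠ η₂ t)
    (hspan : Submodule.span ℝ (η₂ '' Set.Icc 0 1) = ⊤)
    (M₁ M₂ : ℝ → ℝ)
    (hM₁c : ContinuousOn M₁ (Set.Icc 0 1)) (hM₂c : ContinuousOn M₂ (Set.Icc 0 1))
    (hM₁m : StrictMonoOn M₁ (Set.Icc 0 1)) (hM₂m : StrictMonoOn M₂ (Set.Icc 0 1))
    (hM₁maps : Set.MapsTo M₁ (Set.Icc 0 1) (Set.Icc 0 1))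
    (hM₂maps : Set.MapsTo M₂ (Set.Icc 0 1) (Set.Icc 0 1))
    (hM₁0 : M₁ 0 = 0) (hM₂0 : M₂ 0 = 0) (hM₁1 : M₁ 1 = 1) (hM₂1 : M₂ 1 = 1)
    (heq1 : ∀ t ∈ Set.Icc (0:ℝ) 1, Λ₁₁.mulVec (η₁ t) = Λ₁₂.mulVec (η₂ t))
    (heq2 : ∀ t ∈ Set.Icc (0:ℝ) 1,
      Λ₂₁.mulVec (η₁ (M₁ t)) = Λ₂₂.mulVec (η₂ (M₂ t))) :
    ∀ t ∈ Set.Icc (0:ℝ) 1, M₁ t = M₂ t := by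
  -- injectivity of the loading maps
  have hinj₁₁ : Function.Injective Λ₁₁.mulVecLin := by
    have : Function.Injective Λ₁₁.mulVec := Matrix.mulVec_injective_iff.2 hΛ₁₁
    exact this
  have hinj₂₂ : Function.Injective Λ₂₂.mulVecLin := by
    have : Function.Injective Λ₂₂.mulVec := Matrix.mulVec_injective_iff.2 hΛ₂₂
    exact this
  obtain ⟨g₁, hg₁⟩ :=
    (Λ₁₁.mulVecLin).exists_leftInverse_of_injective (LinearMap.ker_eq_bot.2 hinj₁₁)
  obtain ⟨g₂, hg₂⟩ :=
    (Λ₂₂.mulVecLin).exists_leftInverse_of_injective (LinearMap.ker_eq_bot.2 hinj₂₂)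
  have hg₁' : ∀ v, g₁ (Λ₁₁.mulVec v) = v := fun v => by
    have := LinearMap.congr_fun hg₁ v
    simpa using this
  have hg₂' : ∀ v, g₂ (Λ₂₂.mulVec v) = v := fun v => by
    have := LinearMap.congr_fun hg₂ v
    simpa using this
  set L : (Fin r → ℝ) →ₗ[ℝ] (Fin r → ℝ) := g₁ ∘ₗ Λ₁₂.mulVecLin with hLdef
  have hL : ∀ s ∈ Set.Icc (0:ℝ) 1, η₁ s = L (η₂ s) := by
    intro s hs
    have : L (η₂ s) = g₁ (Λ₁₂.mulVec (η₂ s)) := rfl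
    rw [this, ← heq1 s hs, hg₁' (η₁ s)]
  set K : (Fin r → ℝ) →ₗ[ℝ] (Fin r → ℝ) := g₂ ∘ₗ Λ₂₁.mulVecLin ∘ₗ L with hKdef
  have hK : ∀ t ∈ Set.Icc (0:ℝ) 1, η₂ (M₂ t) = K (η₂ (M₁ t)) := by
    intro t ht
    have h1 : K (η₂ (M₁ t)) = g₂ (Λ₂₁.mulVec (L (η₂ (M₁ t)))) := rfl
    rw [h1, ← hL (M₁ t) (hM₁maps ht), heq2 t ht, hg₂' (η₂ (M₂ t))]
  -- surjectivity of warps onto [0,1]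
  have hM₁surj : Set.SurjOn M₁ (Set.Icc 0 1) (Set.Icc 0 1) := by
    have := intermediate_value_Icc (zero_le_one) hM₁c
    rwa [hM₁0, hM₁1] at this
  have hM₂surj : Set.SurjOn M₂ (Set.Icc 0 1) (Set.Icc 0 1) := by
    have := intermediate_value_Icc (zero_le_one) hM₂c
    rwa [hM₂0, hM₂1] at this
  -- K is bijective
  have hKsurj : Function.Surjective K := by
    rw [← LinearMap.range_eq_top]
    rw [← top_le_iff, ← hspan, Submodule.span_le]
    rintro _ ⟨s, hsm, rfl⟩
    obtain ⟨t, htm, rfl⟩ := hM₂surj hsm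
    exact ⟨η₂ (M₁ t), (hK t htm).symm⟩
  have hKinj : Function.Injective K := LinearMap.injective_iff_surjective.2 hKsurj
  set E := LinearEquiv.ofBijective K ⟨hKinj, hKsurj⟩ with hEdef
  set A : (Fin r → ℝ) →L[ℝ] (Fin r → ℝ) := LinearMap.toContinuousLinearMap K with hAdef
  set B : (Fin r → ℝ) →L[ℝ] (Fin r → ℝ) :=
    LinearMap.toContinuousLinearMap (E.symm : (Fin r → ℝ) →ₗ[ℝ] (Fin r → ℝ)) with hBdef
  have hApp : ∀ v, A v = K v := fun v => by
    simp [hAdef, LinearMap.coe_toContinuousLinearMap']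
  have hBapp : ∀ v, B (K v) = v := fun v => by
    have : B (K v) = E.symm (K v) := by
      simp [hBdef, LinearMap.coe_toContinuousLinearMap']
    rw [this]
    exact E.symm_apply_apply v
  have hABapp : ∀ v, A (B v) = v := fun v => by
    have h1 : B v = E.symm v := by simp [hBdef, LinearMap.coe_toContinuousLinearMap']
    rw [hApp, h1]
    exact E.apply_symm_apply v
  have hBA : B * A = 1 := by
    ext v
    simp only [ContinuousLinearMap.mul_apply, ContinuousLinearMap.one_apply]
    rw [hApp]
    exact congrFun (hBapp v) _
  have hAB : A * B = 1 := by
    ext v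
    simp only [ContinuousLinearMap.mul_apply, ContinuousLinearMap.one_apply]
    exact congrFun (hABapp v) _
  -- the warp W = M₂ ∘ M₁⁻¹ and its inverse V = M₁ ∘ M₂⁻¹
  set N₁ : ℝ → ℝ := Function.invFunOn M₁ (Set.Icc 0 1) with hN₁def
  set N₂ : ℝ → ℝ := Function.invFunOn M₂ (Set.Icc 0 1) with hN₂def
  have hN₁mem : ∀ u ∈ Set.Icc (0:ℝ) 1, N₁ u ∈ Set.Icc (0:ℝ) 1 := by
    intro u hu
    obtain ⟨t, htm, hft⟩ := hM₁surj hu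
    exact Function.invFunOn_mem ⟨t, htm, hft⟩
  have hN₁eq : ∀ u ∈ Set.Icc (0:ℝ) 1, M₁ (N₁ u) = u := by
    intro u hu
    obtain ⟨t, htm, hft⟩ := hM₁surj hu
    exact Function.invFunOn_eq ⟨t, htm, hft⟩
  have hN₂mem : ∀ u ∈ Set.Icc (0:ℝ) 1, N₂ u ∈ Set.Icc (0:ℝ) 1 := by
    intro u hu
    obtain ⟨t, htm, hft⟩ := hM₂surj hu
    exact Function.invFunOn_mem ⟨t, htm, hft⟩
  have hN₂eq : ∀ u ∈ Set.Icc (0:ℝ) 1, M₂ (N₂ u) = u := by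
    intro u hu
    obtain ⟨t, htm, hft⟩ := hM₂surj hu
    exact Function.invFunOn_eq ⟨t, htm, hft⟩
  have hN₁left : ∀ t ∈ Set.Icc (0:ℝ) 1, N₁ (M₁ t) = t := fun t ht =>
    (hM₁m.injOn).leftInvOn_invFunOn ht
  have hN₂left : ∀ t ∈ Set.Icc (0:ℝ) 1, N₂ (M₂ t) = t := fun t ht =>
    (hM₂m.injOn).leftInvOn_invFunOn ht
  set W : ℝ → ℝ := fun u => M₂ (N₁ u) with hWdef
  set V : ℝ → ℝ := fun u => M₁ (N₂ u) with hVdef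
  have hWmaps : Set.MapsTo W (Set.Icc 0 1) (Set.Icc 0 1) := fun u hu =>
    hM₂maps (hN₁mem u hu)
  have hVmaps : Set.MapsTo V (Set.Icc 0 1) (Set.Icc 0 1) := fun u hu =>
    hM₁maps (hN₂mem u hu)
  have hWM : ∀ t ∈ Set.Icc (0:ℝ) 1, W (M₁ t) = M₂ t := by
    intro t ht
    show M₂ (N₁ (M₁ t)) = M₂ t
    rw [hN₁left t ht]
  have hVM : ∀ t ∈ Set.Icc (0:ℝ) 1, V (M₂ t) = M₁ t := by
    intro t ht
    show M₁ (N₂ (M₂ t)) = M₁ t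
    rw [hN₂left t ht]
  have hVW : ∀ u ∈ Set.Icc (0:ℝ) 1, V (W u) = u := by
    intro u hu
    have h1 : W u = M₂ (N₁ u) := rfl
    rw [h1, hVM (N₁ u) (hN₁mem u hu)]
    exact hN₁eq u hu
  have hWV : ∀ u ∈ Set.Icc (0:ℝ) 1, W (V u) = u := by
    intro u hu
    have h1 : V u = M₁ (N₂ u) := rfl
    rw [h1, hWM (N₂ u) (hN₂mem u hu)]
    exact hN₂eq u hu
  have hN₁m : StrictMonoOn N₁ (Set.Icc 0 1) := by
    intro u hu v hv huv
    by_contra hcon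
    push_neg at hcon
    have := hM₁m.monotoneOn (hN₁mem v hv) (hN₁mem u hu) hcon
    rw [hN₁eq u hu, hN₁eq v hv] at this
    exact absurd huv (not_lt.2 this)
  have hN₂m : StrictMonoOn N₂ (Set.Icc 0 1) := by
    intro u hu v hv huv
    by_contra hcon
    push_neg at hcon
    have := hM₂m.monotoneOn (hN₂mem v hv) (hN₂mem u hu) hcon
    rw [hN₂eq u hu, hN₂eq v hv] at this
    exact absurd huv (not_lt.2 this)
  have hWm : StrictMonoOn W (Set.Icc 0 1) := fun u hu v hv huv =>
    hM₂m (hN₁mem u hu) (hN₁mem v hv) (hN₁m hu hv huv)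
  have hVm : StrictMonoOn V (Set.Icc 0 1) := fun u hu v hv huv =>
    hM₁m (hN₂mem u hu) (hN₂mem v hv) (hN₂m hu hv huv)
  have h0Icc : (0:ℝ) ∈ Set.Icc (0:ℝ) 1 := ⟨le_refl 0, zero_le_one⟩
  have h1Icc : (1:ℝ) ∈ Set.Icc (0:ℝ) 1 := ⟨zero_le_one, le_refl 1⟩
  have hW0 : W 0 = 0 := by
    have : W (M₁ 0) = M₂ 0 := hWM 0 h0Icc
    rwa [hM₁0, hM₂0] at this
  have hW1 : W 1 = 1 := by
    have : W (M₁ 1) = M₂ 1 := hWM 1 h1Icc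
    rwa [hM₁1, hM₂1] at this
  have hV0 : V 0 = 0 := by
    have : V (M₂ 0) = M₁ 0 := hVM 0 h0Icc
    rwa [hM₁0, hM₂0] at this
  have hV1 : V 1 = 1 := by
    have : V (M₂ 1) = M₁ 1 := hVM 1 h1Icc
    rwa [hM₁1, hM₂1] at this
  have hWsurj : Set.SurjOn W (Set.Icc 0 1) (Set.Icc 0 1) := by
    intro u hu
    obtain ⟨t, htm, rfl⟩ := hM₂surj hu
    exact ⟨M₁ t, hM₁maps htm, hWM t htm⟩
  have hVsurj : Set.SurjOn V (Set.Icc 0 1) (Set.Icc 0 1) := by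
    intro u hu
    obtain ⟨t, htm, rfl⟩ := hM₁surj hu
    exact ⟨M₂ t, hM₂maps htm, hVM t htm⟩
  have hWc : ContinuousOn W (Set.Icc 0 1) :=
    contOn_of_strictMonoOn_surjOn W hWm hWmaps hWsurj hW0 hW1
  have hVc : ContinuousOn V (Set.Icc 0 1) :=
    contOn_of_strictMonoOn_surjOn V hVm hVmaps hVsurj hV0 hV1
  -- the conjugacy relations
  have hAr : ∀ u ∈ Set.Icc (0:ℝ) 1, A (η₂ u) = η₂ (W u) := by
    intro u hu
    have ht : N₁ u ∈ Set.Icc (0:ℝ) 1 := hN₁mem u hu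
    have h1 : η₂ u = η₂ (M₁ (N₁ u)) := by rw [hN₁eq u hu]
    rw [hApp, h1, ← hK (N₁ u) ht]
  have hBr : ∀ u ∈ Set.Icc (0:ℝ) 1, B (η₂ u) = η₂ (V u) := by
    intro u hu
    have ht : N₂ u ∈ Set.Icc (0:ℝ) 1 := hN₂mem u hu
    have h1 : η₂ u = η₂ (M₂ (N₂ u)) := by rw [hN₂eq u hu]
    rw [h1, hK (N₂ u) ht, hBapp]
  -- apply the core lemma in both directions
  have h1 := no_up η₂ hη₂c hη₂nc hspan W V hWc hVc hWm hVm hWmaps hVmaps hVW hWV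
    A B hBA hAr hBr
  have h2 := no_up η₂ hη₂c hη₂nc hspan V W hVc hWc hVm hWm hVmaps hWmaps hWV hVW
    B A hAB hBr hAr
  have hWid : ∀ u ∈ Set.Icc (0:ℝ) 1, W u = u := by
    intro u hu
    rcases lt_trichotomy u (W u) with h | h | h
    · exact absurd h (h1 u hu)
    · exact h.symm
    · exfalso
      have hWu : W u ∈ Set.Icc (0:ℝ) 1 := hWmaps hu
      have : W u < V (W u) := by rw [hVW u hu]; exact h
      exact h2 (W u) hWu this
  intro t ht
  have := hWM t ht
  rw [hWid (M₁ t) (hM₁maps ht)] at this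
  exact this
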